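/- arXiv:2406.19590 — 3 statements merged into one kernel-verified Lean document; each statement's English description precedes it below -/
import Mathlib

section
/- Let λ > 0, γ > 0 and Γ > 0. Let K, L_0 and L_1, …, L_K be positive integers. For each k ∈ {1, …, K}, p ∈ {1, …, L_k} and q ∈ {1, …, L_0}, let β_{k,p} and β_{0,q} be complex numbers and let b_{k,p}^q be real numbers such that the family consisting of 1 together with all the numbers b_{k,p}^q/λ is linearly independent over the rationals. Then there exists a positive integer d_y such that for every k ∈ {1, …, K}: γ·|Σ_{p=1}^{L_k} Σ_{q=1}^{L_0} conj(β_{k,p})·β_{0,q}·(1 + exp(i·2π·d_y·b_{k,p}^q/λ))|² ≤ Γ. -/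
open Complex Finset in
lemma abs_one_add_exp (x : ℝ) :
    ‖1 + Complex.exp ((x:ℂ) * Complex.I)‖ = Real.sqrt (2 + 2 * Real.cos x) := by
  rw [Complex.exp_mul_I]
  rw [← Complex.ofReal_cos, ← Complex.ofReal_sin]
  have : (1 : ℂ) + (↑(Real.cos x) + ↑(Real.sin x) * I) = ↑(1 + Real.cos x) + ↑(Real.sin x) * I := by
    push_cast; ring
  rw [this, Complex.norm_add_mul_I]
  congr 1
  nlinarith [Real.sin_sq_add_cos_sq x]

open Complex Finset in
lemma geom_bound (w : ℂ) (hw : ‖w‖ = 1) (hw1 : w ≠ 1) (D : ℕ) :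
    ‖∑ d ∈ Finset.range D, w ^ (d + 1)‖ ≤ 2 / ‖w - 1‖ := by
  have h1 : (∑ d ∈ Finset.range D, w ^ (d + 1)) = w * ((w ^ D - 1) / (w - 1)) := by
    rw [← geom_sum_eq hw1 D, Finset.mul_sum]
    exact Finset.sum_congr rfl fun d _ => by ring
  rw [h1, norm_mul, norm_div, hw, one_mul]
  have h2 : ‖w ^ D - 1‖ ≤ 2 := by
    calc ‖w ^ D - 1‖ ≤ ‖w ^ D‖ + ‖(1:ℂ)‖ := by
          exact norm_sub_le _ 1
      _ ≤ 2 := by rw [norm_pow, hw, one_pow, norm_one]; norm_num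
  have h3 : 0 < ‖w - 1‖ := norm_pos_iff.mpr (sub_ne_zero.mpr hw1)
  gcongr

noncomputable def cc (n j : ℕ) : ℝ := (-1)^(n+j) * ((2*n).choose j) / 4^n

open Complex Finset in
lemma expand_pow (n : ℕ) (x : ℝ) :
    (((1 - Real.cos x)/2 : ℝ) : ℂ)^n
      = ∑ j ∈ Finset.range (2*n+1), ((cc n j : ℝ) : ℂ) * Complex.exp ((x:ℂ) * I) ^ ((j:ℤ) - n) := by
  set u := Complex.exp ((x:ℂ) * I) with hu_def
  have hu : u ≠ 0 := Complex.exp_ne_zero _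
  have h2cos : 2 * (Real.cos x : ℂ) = u + u⁻¹ := by
    rw [Complex.ofReal_cos]
    rw [Complex.two_cos, ← Complex.exp_neg, neg_mul]
  have h2 : 2 * (Real.cos x : ℂ) * u = u^2 + 1 := by
    rw [h2cos]; field_simp
  have hcos : (((1 - Real.cos x)/2 : ℝ) : ℂ) = -(u - 1)^2 / (4 * u) := by
    push_cast
    field_simp
    rw [Complex.ofReal_cos] at h2
    linear_combination (-2 : ℂ) * h2
  rw [hcos]
  have hpow : (-(u - 1)^2 / (4 * u))^n = (u-1)^(2*n) * ((-1)^n / (4^n * u^n)) := by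
    rw [div_pow, neg_pow, mul_pow, ← pow_mul]
    ring
  rw [hpow, sub_pow u 1 (2*n), Finset.sum_mul]
  refine Finset.sum_congr rfl fun j hj => ?_
  rw [zpow_sub₀ hu, zpow_natCast, zpow_natCast]
  unfold cc
  push_cast
  have hsign : (-1:ℂ)^(j+2*n) = (-1)^j := by rw [pow_add, pow_mul]; norm_num
  rw [hsign, pow_add]
  have h4 : (4:ℂ)^n ≠ 0 := pow_ne_zero _ (by norm_num)
  have hun : u^n ≠ 0 := pow_ne_zero _ hu
  field_simp
  ring


open Complex Finset in
lemma kron (S : Type) [Fintype S] [DecidableEq S] (y : S → ℝ)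
    (hy : ∀ (z : S → ℤ) (m : ℤ), (∑ s, (z s : ℝ) * y s) = (m : ℝ) → ∀ s, z s = 0)
    (ε : ℝ) (hε : 0 < ε) :
    ∃ d : ℕ, 0 < d ∧ ∀ s,
      ‖1 + Complex.exp (((2*Real.pi*d*y s : ℝ) : ℂ) * Complex.I)‖ ≤ ε := by
  classical
  set M := Fintype.card S with hM
  set δ : ℝ := min 1 ((ε/2)^2) with hδ
  have hδ0 : 0 < δ := lt_min one_pos (by positivity)
  have hδ1 : δ ≤ 1 := min_le_left _ _
  set r : ℝ := 1 - δ with hr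
  have hr0 : 0 ≤ r := by simp [hr]; linarith
  have hr1 : r < 1 := by simp [hr]; linarith
  -- choose n
  have decay : Filter.Tendsto (fun n : ℕ => (2:ℝ)^(M+1) * ((n:ℝ)^M * r^n))
      Filter.atTop (nhds 0) := by
    have hs : Summable (fun n : ℕ => (n:ℝ)^M * r^n) :=
      summable_pow_mul_geometric_of_norm_lt_one M (by rwa [Real.norm_eq_abs, _root_.abs_of_nonneg hr0])
    simpa using (hs.tendsto_atTop_zero.const_mul ((2:ℝ)^(M+1)))
  obtain ⟨n, hn⟩ := ((decay.eventually_lt_const one_pos).and (Filter.eventually_ge_atTop 1)).exists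
  obtain ⟨hn2, hn1⟩ := hn
  have hnpos : 0 < n := hn1
  -- the central coefficient
  set a : ℝ := ((2*n).choose n : ℝ) / 4^n with ha_def
  have ha0 : 0 < a := by
    have : 0 < ((2*n).choose n : ℝ) := by
      exact_mod_cast Nat.choose_pos (by omega)
    positivity
  have ha1 : a ≤ 1 := by
    rw [ha_def, div_le_one (by positivity)]
    have : (2*n).choose n ≤ 2^(2*n) := by
      calc (2*n).choose n ≤ ∑ m ∈ Finset.range (2*n+1), (2*n).choose m :=
            Finset.single_le_sum (f := fun m => (2*n).choose m) (fun _ _ => Nat.zero_le _)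
              (Finset.mem_range.mpr (by omega))
        _ = 2^(2*n) := Nat.sum_range_choose (2*n)
    calc ((2*n).choose n : ℝ) ≤ 2^(2*n) := by exact_mod_cast this
      _ = 4^n := by rw [pow_mul]; norm_num
  have ha : 1/(2*(n:ℝ)) ≤ a := by
    have h4 := Nat.four_pow_le_two_mul_self_mul_centralBinom n hnpos
    rw [Nat.centralBinom] at h4
    have h4' : (4:ℝ)^n ≤ 2*n * ((2*n).choose n) := by exact_mod_cast h4
    rw [ha_def, div_le_div_iff₀ (by positivity) (by positivity), one_mul]
    calc (4:ℝ)^n ≤ 2*n * ((2*n).choose n) := h4'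
      _ = ((2*n).choose n) * (2*n) := by ring
  have hkey : r^n < a^M/2 := by
    have hnM : (0:ℝ) < (n:ℝ)^M := by positivity
    have h1 : r^n * (2^(M+1) * (n:ℝ)^M) < 1 := by nlinarith [pow_nonneg hr0 n]
    have h2 : (1/(2*(n:ℝ)))^M ≤ a^M :=
      pow_le_pow_left₀ (by positivity) ha M
    have h3 : (1/(2*(n:ℝ)))^M = 1/(2^M * (n:ℝ)^M) := by
      rw [div_pow, mul_pow]; norm_num
    have h4 : 1/(2^(M+1) * (n:ℝ)^M) ≤ a^M/2 := by
      rw [pow_succ]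
      calc 1/(2^M * 2 * (n:ℝ)^M) = (1/(2^M * (n:ℝ)^M))/2 := by ring
        _ ≤ a^M/2 := by rw [← h3]; linarith
    calc r^n < 1/(2^(M+1) * (n:ℝ)^M) := by
          rw [lt_div_iff₀ (by positivity)]; linarith
      _ ≤ a^M/2 := h4
  -- set up trig polynomial machinery
  set w : S → ℕ → ℂ := fun s j =>
    Complex.exp ((((j:ℝ) - n) * (2*Real.pi*y s) : ℝ) * Complex.I) with hw_def
  set JJ : Finset (S → ℕ) := Fintype.piFinset (fun _ : S => Finset.range (2*n+1)) with hJJ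
  set WW : (S → ℕ) → ℂ := fun J => ∏ s, w s (J s) with hWW_def
  set g : ℕ → ℝ := fun d => ∏ s, ((1 - Real.cos (2*Real.pi*(d+1)*y s))/2)^n with hg_def
  have hg_expand : ∀ d : ℕ, ((g d : ℝ) : ℂ)
      = ∑ J ∈ JJ, (∏ s, ((cc n (J s) : ℝ) : ℂ)) * (WW J)^(d+1) := by
    intro d
    have hstep : ∀ s : S, ((((1 - Real.cos (2*Real.pi*(d+1)*y s))/2 : ℝ)):ℂ)^n
        = ∑ j ∈ Finset.range (2*n+1), ((cc n j : ℝ):ℂ) * (w s j)^(d+1) := by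
      intro s
      rw [expand_pow n (2*Real.pi*(d+1)*y s)]
      refine Finset.sum_congr rfl fun j hj => ?_
      congr 1
      simp only [hw_def]
      rw [← Complex.exp_int_mul, ← Complex.exp_nat_mul]
      congr 1
      push_cast
      ring
    calc ((g d : ℝ):ℂ)
        = ∏ s, ((((1 - Real.cos (2*Real.pi*(d+1)*y s))/2 : ℝ)):ℂ)^n := by
          simp only [hg_def, Complex.ofReal_prod, Complex.ofReal_pow]
      _ = ∏ s, ∑ j ∈ Finset.range (2*n+1), ((cc n j : ℝ):ℂ) * (w s j)^(d+1) :=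
          Finset.prod_congr rfl fun s _ => hstep s
      _ = ∑ J ∈ JJ, ∏ s, (((cc n (J s) : ℝ):ℂ) * (w s (J s))^(d+1)) :=
          Finset.prod_univ_sum _ _
      _ = ∑ J ∈ JJ, (∏ s, ((cc n (J s) : ℝ) : ℂ)) * (WW J)^(d+1) := by
          refine Finset.sum_congr rfl fun J _ => ?_
          rw [Finset.prod_mul_distrib, Finset.prod_pow]
  have hWW_exp : ∀ J : S → ℕ, WW J
      = Complex.exp (((∑ s, ((J s:ℝ) - n) * (2*Real.pi*y s)) : ℝ) * Complex.I) := by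
    intro J
    simp only [hWW_def, hw_def]
    rw [← Complex.exp_sum]
    congr 1
    rw [Complex.ofReal_sum, Finset.sum_mul]
  have habsWW : ∀ J : S → ℕ, ‖WW J‖ = 1 := fun J => by
    rw [hWW_exp]; exact Complex.norm_exp_ofReal_mul_I _
  set Jn : S → ℕ := fun _ => n with hJn_def
  have hJn_mem : Jn ∈ JJ := by
    simp only [hJJ, Fintype.mem_piFinset]
    intro s
    simp only [hJn_def]
    exact Finset.mem_range.mpr (by omega)
  have hWWJn : WW Jn = 1 := by
    rw [hWW_exp]
    have : (∑ s, ((Jn s:ℝ) - n) * (2*Real.pi*y s)) = 0 := by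
      apply Finset.sum_eq_zero; intro s _; simp [hJn_def]
    rw [this]; simp
  have hCJn : (∏ s, ((cc n (Jn s) : ℝ) : ℂ)) = ((a^M : ℝ) : ℂ) := by
    have hccnn : cc n n = a := by
      unfold cc
      rw [ha_def, ← two_mul, pow_mul]
      norm_num
    simp only [hJn_def, hccnn]
    rw [Finset.prod_const, Complex.ofReal_pow, Finset.card_univ]
  have hWWne : ∀ J ∈ JJ.erase Jn, WW J ≠ 1 := by
    intro J hJ hWW1
    have hJne : J ≠ Jn := (Finset.mem_erase.mp hJ).1
    rw [hWW_exp] at hWW1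
    obtain ⟨m, hm⟩ := Complex.exp_eq_one_iff.mp hWW1
    set ω : ℝ := ∑ s, ((J s:ℝ) - n) * (2*Real.pi*y s) with hω
    have hωm : (ω : ℂ) = (m : ℂ) * (2*Real.pi) := by
      apply mul_right_cancel₀ Complex.I_ne_zero
      rw [hm]; push_cast; ring
    have hωm' : ω = m * (2*Real.pi) := by exact_mod_cast hωm
    have hsum : (∑ s, (((fun s => (J s : ℤ) - n) s : ℝ)) * y s) = (m : ℝ) := by
      have hexp : ω = 2*Real.pi * (∑ s, ((J s:ℝ) - n) * y s) := by
        rw [hω, Finset.mul_sum]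
        exact Finset.sum_congr rfl fun s _ => by ring
      have h2π : (2*Real.pi) ≠ 0 := by positivity
      have : 2*Real.pi * (∑ s, ((J s:ℝ) - n) * y s) = 2*Real.pi * (m:ℝ) := by
        rw [← hexp, hωm']; ring
      have := mul_left_cancel₀ h2π this
      rw [← this]
      push_cast
      rfl
    have hz := hy (fun s => (J s : ℤ) - n) m hsum
    apply hJne
    funext s
    have h0 : (J s : ℤ) - n = 0 := hz s
    show J s = n
    omega
  set B : ℝ := ∑ J ∈ JJ.erase Jn,
      ‖∏ s, ((cc n (J s) : ℝ) : ℂ)‖ * (2 / ‖WW J - 1‖) with hB_def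
  have hB0 : 0 ≤ B := Finset.sum_nonneg fun J _ => by positivity
  have hmain : ∀ D : ℕ, |(∑ d ∈ Finset.range D, g d) - D * a^M| ≤ B := by
    intro D
    have e1 : ((∑ d ∈ Finset.range D, g d : ℝ) : ℂ)
        = ∑ J ∈ JJ, (∏ s, ((cc n (J s) : ℝ) : ℂ)) * (∑ d ∈ Finset.range D, (WW J)^(d+1)) := by
      calc ((∑ d ∈ Finset.range D, g d : ℝ) : ℂ)
          = ∑ d ∈ Finset.range D, ((g d : ℝ):ℂ) := Complex.ofReal_sum _ _
        _ = ∑ d ∈ Finset.range D, ∑ J ∈ JJ,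
              (∏ s, ((cc n (J s) : ℝ) : ℂ)) * (WW J)^(d+1) :=
            Finset.sum_congr rfl fun d _ => hg_expand d
        _ = ∑ J ∈ JJ, ∑ d ∈ Finset.range D,
              (∏ s, ((cc n (J s) : ℝ) : ℂ)) * (WW J)^(d+1) := Finset.sum_comm
        _ = ∑ J ∈ JJ, (∏ s, ((cc n (J s) : ℝ) : ℂ)) * (∑ d ∈ Finset.range D, (WW J)^(d+1)) :=
            Finset.sum_congr rfl fun J _ => (Finset.mul_sum _ _ _).symm
    have e2 : (∏ s, ((cc n (Jn s) : ℝ) : ℂ)) * (∑ d ∈ Finset.range D, (WW Jn)^(d+1))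
        = ((a^M : ℝ) : ℂ) * D := by
      rw [hCJn, hWWJn]
      simp
    have h1 : ((∑ d ∈ Finset.range D, g d - D * a^M : ℝ) : ℂ)
        = ∑ J ∈ JJ.erase Jn, (∏ s, ((cc n (J s) : ℝ) : ℂ))
            * (∑ d ∈ Finset.range D, (WW J)^(d+1)) := by
      rw [Complex.ofReal_sub, e1, ← Finset.add_sum_erase JJ _ hJn_mem, e2]
      push_cast
      ring
    calc |(∑ d ∈ Finset.range D, g d) - D * a^M|
        = ‖(((∑ d ∈ Finset.range D, g d - D * a^M : ℝ)):ℂ)‖ :=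
          by rw [Complex.norm_real, Real.norm_eq_abs]
      _ = ‖∑ J ∈ JJ.erase Jn, (∏ s, ((cc n (J s) : ℝ) : ℂ))
            * (∑ d ∈ Finset.range D, (WW J)^(d+1))‖ := by rw [h1]
      _ ≤ ∑ J ∈ JJ.erase Jn, ‖(∏ s, ((cc n (J s) : ℝ) : ℂ))
            * (∑ d ∈ Finset.range D, (WW J)^(d+1))‖ := norm_sum_le _ _
      _ ≤ B := by
          rw [hB_def]
          refine Finset.sum_le_sum fun J hJ => ?_
          rw [norm_mul]
          exact mul_le_mul_of_nonneg_left (geom_bound (WW J) (habsWW J) (hWWne J hJ) D)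
            (norm_nonneg _)
  set D : ℕ := ⌈2*B/a^M⌉₊ + 1 with hD_def
  have hD0 : 0 < D := Nat.succ_pos _
  have haM : (0:ℝ) < a^M := by positivity
  have hDB : B ≤ D * a^M / 2 := by
    have h1 : 2*B/a^M ≤ (D:ℝ) := by
      calc 2*B/a^M ≤ ⌈2*B/a^M⌉₊ := Nat.le_ceil _
        _ ≤ D := by exact_mod_cast Nat.le_succ _
    rw [div_le_iff₀ haM] at h1
    linarith
  have hsum_lb : ∑ d ∈ Finset.range D, (a^M/2) ≤ ∑ d ∈ Finset.range D, g d := by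
    have h2 := (abs_le.mp (hmain D)).1
    rw [Finset.sum_const, Finset.card_range, nsmul_eq_mul]
    linarith
  obtain ⟨d, hd_mem, hd⟩ :=
    Finset.exists_le_of_sum_le (Finset.nonempty_range_iff.mpr (by omega)) hsum_lb
  refine ⟨d+1, Nat.succ_pos _, fun s => ?_⟩
  have hhs_bounds : ∀ t : S, 0 ≤ (1 - Real.cos (2*Real.pi*((d:ℝ)+1)*y t))/2 ∧
      (1 - Real.cos (2*Real.pi*((d:ℝ)+1)*y t))/2 ≤ 1 := by
    intro t
    constructor
    · nlinarith [Real.cos_le_one (2*Real.pi*((d:ℝ)+1)*y t)]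
    · nlinarith [Real.neg_one_le_cos (2*Real.pi*((d:ℝ)+1)*y t)]
  have hfac : g d ≤ ((1 - Real.cos (2*Real.pi*((d:ℝ)+1)*y s))/2) ^ n := by
    simp only [hg_def]
    rw [← Finset.mul_prod_erase Finset.univ _ (Finset.mem_univ s)]
    have hP1 : ∏ t ∈ Finset.univ.erase s, ((1 - Real.cos (2*Real.pi*((d:ℝ)+1)*y t))/2) ^ n ≤ 1 :=
      Finset.prod_le_one (fun t _ => pow_nonneg (hhs_bounds t).1 n)
        (fun t _ => pow_le_one₀ (hhs_bounds t).1 (hhs_bounds t).2)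
    exact mul_le_of_le_one_right (pow_nonneg (hhs_bounds s).1 n) hP1
  have hhs : 1 - δ < (1 - Real.cos (2*Real.pi*((d:ℝ)+1)*y s))/2 := by
    by_contra hcon
    push_neg at hcon
    have h5 : ((1 - Real.cos (2*Real.pi*((d:ℝ)+1)*y s))/2) ^ n ≤ r ^ n :=
      pow_le_pow_left₀ (hhs_bounds s).1 (by rw [hr]; exact hcon) n
    have h6 : ((1 - Real.cos (2*Real.pi*((d:ℝ)+1)*y s))/2) ^ n < a^M/2 :=
      lt_of_le_of_lt h5 hkey
    linarith [le_trans hd hfac]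
  have hcos : Real.cos (2*Real.pi*((d:ℝ)+1)*y s) < 2*δ - 1 := by linarith
  have hx : (2*Real.pi*((d+1:ℕ):ℝ)*y s) = 2*Real.pi*((d:ℝ)+1)*y s := by push_cast; ring
  rw [hx, abs_one_add_exp]
  have hδε : δ ≤ (ε/2)^2 := min_le_right _ _
  calc Real.sqrt (2 + 2*Real.cos (2*Real.pi*((d:ℝ)+1)*y s))
      ≤ Real.sqrt (4*(ε/2)^2) := Real.sqrt_le_sqrt (by linarith)
    _ = ε := by
        rw [show 4*(ε/2)^2 = ε^2 by ring]
        exact Real.sqrt_sq hε.le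

open Complex in
/-- Core of Theorem 1 (N = 2): if 1 together with all the numbers b_{k,p}^q/λ is a
ℚ-linearly independent family, then there is a positive integer spacing d_y such that
for every primary receiver k the interference-power upper bound
γ·|Σ_p Σ_q conj(β_{k,p})·β_{0,q}·(1 + exp(i·2π·d_y·b_{k,p}^q/λ))|² is at most Γ. -/
theorem exists_spacing_interference_below_threshold
    (lam γ Γ : ℝ) (hlam : 0 < lam) (hγ : 0 < γ) (hΓ : 0 < Γ)
    (K L0 : ℕ) (hK : 0 < K) (hL0 : 0 < L0)
    (L : Fin K → ℕ) (hL : ∀ k, 0 < L k)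
    (β : (k : Fin K) → Fin (L k) → ℂ) (β0 : Fin L0 → ℂ)
    (b : (k : Fin K) → Fin (L k) → Fin L0 → ℝ)
    (hind : LinearIndependent ℚ
      (fun o : Option ((k : Fin K) × (Fin (L k) × Fin L0)) =>
        Option.elim o (1 : ℝ) (fun s => b s.1 s.2.1 s.2.2 / lam))) :
    ∃ d : ℕ, 0 < d ∧ ∀ k : Fin K,
      γ * ‖(∑ p : Fin (L k), ∑ q : Fin L0,
          (starRingEnd ℂ) (β k p) * β0 q *
            (1 + Complex.exp (Complex.I * (2 * Real.pi * d * b k p q / lam))))‖ ^ 2 ≤ Γ := by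
    classical
  have hy : ∀ (z : ((k : Fin K) × (Fin (L k) × Fin L0)) → ℤ) (m : ℤ),
      (∑ s : ((k : Fin K) × (Fin (L k) × Fin L0)), (z s : ℝ) * (b s.1 s.2.1 s.2.2 / lam)) = (m : ℝ) → ∀ s, z s = 0 := by
    intro z m hzm s
    have h0 : (∑ o : Option ((k : Fin K) × (Fin (L k) × Fin L0)), (fun o => Option.elim o (-(m:ℚ)) (fun t => (z t : ℚ))) o •
        (Option.elim o (1:ℝ) fun t => b t.1 t.2.1 t.2.2 / lam)) = 0 := by
      rw [Fintype.sum_option]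
      simp only [Option.elim, Rat.smul_def]
      push_cast
      rw [hzm]
      ring
    have h := Fintype.linearIndependent_iff.mp hind
      (fun o => Option.elim o (-(m:ℚ)) (fun t => (z t : ℚ))) h0 (some s)
    simpa using h
  set T : ℝ := 1 + ∑ s : ((k : Fin K) × (Fin (L k) × Fin L0)), ‖(starRingEnd ℂ) (β s.1 s.2.1) * β0 s.2.2‖ with hT
  have hT0 : 0 < T := by positivity
  have hsq : 0 < Real.sqrt (Γ/γ) := Real.sqrt_pos.mpr (by positivity)
  set ε : ℝ := Real.sqrt (Γ/γ) / T with hε_def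
  have hε : 0 < ε := by positivity
  obtain ⟨d, hd0, hdb⟩ := kron ((k : Fin K) × (Fin (L k) × Fin L0)) (fun s => b s.1 s.2.1 s.2.2 / lam) hy ε hε
  refine ⟨d, hd0, fun k => ?_⟩
  have hbound : ‖∑ p : Fin (L k), ∑ q : Fin L0,
      (starRingEnd ℂ) (β k p) * β0 q *
        (1 + Complex.exp (Complex.I * (2 * Real.pi * d * b k p q / lam)))‖ ≤ Real.sqrt (Γ/γ) := by
    have step1 : ‖∑ p : Fin (L k), ∑ q : Fin L0,
        (starRingEnd ℂ) (β k p) * β0 q *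
          (1 + Complex.exp (Complex.I * (2 * Real.pi * d * b k p q / lam)))‖
        ≤ ∑ p : Fin (L k), ∑ q : Fin L0,
            ‖(starRingEnd ℂ) (β k p) * β0 q‖ * ε := by
      refine (norm_sum_le _ _).trans (Finset.sum_le_sum fun p _ => ?_)
      refine (norm_sum_le _ _).trans (Finset.sum_le_sum fun q _ => ?_)
      rw [norm_mul]
      refine mul_le_mul_of_nonneg_left ?_ (norm_nonneg _)
      have harg : Complex.I * (2 * Real.pi * d * b k p q / lam)
          = (((2*Real.pi*(d:ℝ)*(b k p q / lam) : ℝ)) : ℂ) * Complex.I := by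
        push_cast
        ring
      rw [harg]
      exact hdb ⟨k, (p, q)⟩
    refine step1.trans ?_
    have step2 : ∑ p : Fin (L k), ∑ q : Fin L0,
        ‖(starRingEnd ℂ) (β k p) * β0 q‖ * ε ≤ T * ε := by
      simp only [← Finset.sum_mul]
      refine mul_le_mul_of_nonneg_right ?_ hε.le
      have h1 : ∑ p : Fin (L k), ∑ q : Fin L0, ‖(starRingEnd ℂ) (β k p) * β0 q‖
          = ∑ pq : Fin (L k) × Fin L0, ‖(starRingEnd ℂ) (β k pq.1) * β0 pq.2‖ := by
        rw [← Finset.sum_product']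
        rfl
      rw [h1]
      have h2 : ∑ pq : Fin (L k) × Fin L0, ‖(starRingEnd ℂ) (β k pq.1) * β0 pq.2‖
          ≤ ∑ s : ((k : Fin K) × (Fin (L k) × Fin L0)), ‖(starRingEnd ℂ) (β s.1 s.2.1) * β0 s.2.2‖ := by
        have hsig : ∑ s : ((k : Fin K) × (Fin (L k) × Fin L0)),
            ‖(starRingEnd ℂ) (β s.1 s.2.1) * β0 s.2.2‖
            = ∑ k' : Fin K, ∑ pq : Fin (L k') × Fin L0,
              ‖(starRingEnd ℂ) (β k' pq.1) * β0 pq.2‖ := by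
          rw [← Finset.univ_sigma_univ, Finset.sum_sigma]
        rw [hsig]
        exact Finset.single_le_sum (f := fun k' => ∑ pq : Fin (L k') × Fin L0,
          ‖(starRingEnd ℂ) (β k' pq.1) * β0 pq.2‖)
          (fun k' _ => Finset.sum_nonneg fun pq _ => norm_nonneg _)
          (Finset.mem_univ k)
      rw [hT]
      linarith
    refine step2.trans ?_
    rw [hε_def]
    rw [mul_div_cancel₀ _ hT0.ne']
  have habs0 : (0:ℝ) ≤ ‖∑ p : Fin (L k), ∑ q : Fin L0,
      (starRingEnd ℂ) (β k p) * β0 q *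
        (1 + Complex.exp (Complex.I * (2 * Real.pi * d * b k p q / lam)))‖ :=
    norm_nonneg _
  have hsq2 : ‖∑ p : Fin (L k), ∑ q : Fin L0,
      (starRingEnd ℂ) (β k p) * β0 q *
        (1 + Complex.exp (Complex.I * (2 * Real.pi * d * b k p q / lam)))‖ ^ 2 ≤ Γ/γ := by
    calc _ ≤ Real.sqrt (Γ/γ) ^ 2 := by
          exact pow_le_pow_left₀ habs0 hbound 2
      _ = Γ/γ := Real.sq_sqrt (by positivity)
  calc γ * _ ≤ γ * (Γ/γ) := by exact mul_le_mul_of_nonneg_left hsq2 hγ.le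
    _ = Γ := by field_simp
end

section
/- Let N ≥ 2 be an integer and let I_N denote the number of prime factors of N counted with multiplicity. Let L be a positive integer with L ≤ I_N, let λ > 0 and D_min > 0, and let (a_1, b_1), …, (a_L, b_L) be pairs of real numbers with a_l ≠ 0 for every l. Then there exist N points t_1 = (x_1, y_1), …, t_N = (x_N, y_N) in ℝ² with ‖t_n − t_m‖ ≥ D_min for all n ≠ m, such that Σ_{n=1}^{N} exp(i·(2π/λ)·(a_l·x_n + b_l·y_n)) = 0 for every l ∈ {1, …, L}. -/
open Finset

/-- There is a real of the form `c * (m + q)`, `m` an integer, at least `r`. -/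
lemma exists_int_form (c q r : ℝ) (hc : c ≠ 0) :
    ∃ x : ℝ, (∃ m : ℤ, x = c * (m + q)) ∧ r ≤ x := by
  rcases hc.lt_or_gt with h | h
  · refine ⟨c * (⌊r / c - q⌋ + q), ⟨_, rfl⟩, ?_⟩
    have h1 : (⌊r / c - q⌋ : ℝ) ≤ r / c - q := Int.floor_le _
    have h2 : c * (r / c) = r := by field_simp
    nlinarith
  · refine ⟨c * (⌈r / c - q⌉ + q), ⟨_, rfl⟩, ?_⟩
    have h1 : (r / c - q : ℝ) ≤ ⌈r / c - q⌉ := Int.le_ceil _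
    have h2 : c * (r / c) = r := by field_simp
    nlinarith

/-- Recursive construction: `(dp i).1` is the running lower bound, `(dp i).2` the value `d i`. -/
noncomputable def dp (c q g : ℕ → ℝ) (hc : ∀ i, c i ≠ 0) (D : ℝ) : ℕ → ℝ × ℝ
  | 0 => (D, Classical.choose (exists_int_form (c 0) (q 0) D (hc 0)))
  | (i + 1) =>
    let p := dp c q g hc D i
    let S := p.1 + g i * p.2
    (S, Classical.choose (exists_int_form (c (i + 1)) (q (i + 1)) S (hc (i + 1))))

noncomputable def dseq (c q g : ℕ → ℝ) (hc : ∀ i, c i ≠ 0) (D : ℝ) (i : ℕ) : ℝ :=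
  (dp c q g hc D i).2

lemma dp_fst (c q g : ℕ → ℝ) (hc : ∀ i, c i ≠ 0) (D : ℝ) (i : ℕ) :
    (dp c q g hc D i).1 = D + ∑ j ∈ range i, g j * dseq c q g hc D j := by
  induction i with
  | zero => simp [dp]
  | succ i ih =>
    rw [Finset.sum_range_succ]
    show (dp c q g hc D i).1 + g i * (dp c q g hc D i).2 = _
    rw [ih, show (dp c q g hc D i).2 = dseq c q g hc D i from rfl]; ring

lemma dseq_form (c q g : ℕ → ℝ) (hc : ∀ i, c i ≠ 0) (D : ℝ) (i : ℕ) :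
    ∃ m : ℤ, dseq c q g hc D i = c i * (m + q i) := by
  cases i with
  | zero => exact (Classical.choose_spec (exists_int_form (c 0) (q 0) D (hc 0))).1
  | succ i => exact (Classical.choose_spec (exists_int_form (c (i+1)) (q (i+1)) _ (hc (i+1)))).1

lemma dseq_ge (c q g : ℕ → ℝ) (hc : ∀ i, c i ≠ 0) (D : ℝ) (i : ℕ) :
    D + ∑ j ∈ range i, g j * dseq c q g hc D j ≤ dseq c q g hc D i := by
  rw [← dp_fst]
  cases i with
  | zero => exact (Classical.choose_spec (exists_int_form (c 0) (q 0) D (hc 0))).2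
  | succ i => exact (Classical.choose_spec (exists_int_form (c (i+1)) (q (i+1)) _ (hc (i+1)))).2

lemma sep_lemma (d g : ℕ → ℝ) (hg : ∀ j, 0 ≤ g j) (D : ℝ) (hD : 0 < D)
    (hd : ∀ i, D + ∑ j ∈ range i, g j * d j ≤ d i)
    (e : ℕ → ℤ) (he : ∀ j, |(e j : ℝ)| ≤ g j)
    (K i0 : ℕ) (hi0 : i0 < K) (hne : e i0 ≠ 0) (hmax : ∀ j, i0 < j → e j = 0) :
    D ≤ |∑ j ∈ range K, (e j : ℝ) * d j| := by
  have hdpos : ∀ i, 0 < d i := by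
    intro i
    induction i using Nat.strong_induction_on with
    | _ i ih =>
      have := hd i
      have hs : 0 ≤ ∑ j ∈ range i, g j * d j :=
        Finset.sum_nonneg fun j hj => mul_nonneg (hg j) (le_of_lt (ih j (mem_range.mp hj)))
      linarith
  -- sum equals sum over range (i0+1)
  have hsum : ∑ j ∈ range K, (e j : ℝ) * d j = ∑ j ∈ range (i0 + 1), (e j : ℝ) * d j := by
    refine (Finset.sum_subset (Finset.range_subset_range.mpr hi0) ?_).symm
    intro j hj hj2
    have : i0 < j := by
      simp only [mem_range] at hj hj2; omega
    simp [hmax j this]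
  rw [hsum, Finset.sum_range_succ]
  have h1 : (1 : ℝ) ≤ |(e i0 : ℝ)| := by
    rw [← Int.cast_abs]
    have : (1 : ℤ) ≤ |e i0| := by
      rcases lt_trichotomy (e i0) 0 with h | h | h
      · rw [abs_of_neg h]; omega
      · exact absurd h hne
      · rw [abs_of_pos h]; omega
    exact_mod_cast this
  have hrest : |∑ j ∈ range i0, (e j : ℝ) * d j| ≤ ∑ j ∈ range i0, g j * d j := by
    refine le_trans (Finset.abs_sum_le_sum_abs _ _) ?_
    refine Finset.sum_le_sum fun j _ => ?_
    rw [abs_mul, abs_of_pos (hdpos j)]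
    exact mul_le_mul_of_nonneg_right (he j) (le_of_lt (hdpos j))
  have hlast : d i0 ≤ |(e i0 : ℝ) * d i0| := by
    rw [abs_mul, abs_of_pos (hdpos i0)]
    nlinarith [hdpos i0]
  have hbound : ∑ j ∈ range i0, g j * d j ≤ d i0 - D := by
    have := hd i0; linarith
  calc D ≤ |(e i0 : ℝ) * d i0| - |∑ j ∈ range i0, (e j : ℝ) * d j| := by
        have := le_trans hrest hbound; linarith
  _ ≤ |∑ j ∈ range i0, (e j : ℝ) * d j + (e i0 : ℝ) * d i0| := by
        set A := ∑ j ∈ range i0, (e j : ℝ) * d j with hA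
        set B := (e i0 : ℝ) * d i0 with hB
        have key : |B| ≤ |A + B| + |A| := by
          calc |B| = |(A + B) + (-A)| := by congr 1; ring
          _ ≤ |A + B| + |-A| := abs_add_le _ _
          _ = |A + B| + |A| := by rw [abs_neg]
        linarith

/-- sum of all F-th roots of unity vanishes -/
lemma roots_sum_zero (F : ℕ) (hF : 2 ≤ F) :
    ∑ j ∈ range F, Complex.exp (2 * Real.pi * Complex.I / F) ^ j = 0 := by
  have hF0 : (F : ℂ) ≠ 0 := by exact_mod_cast (by omega : F ≠ 0)
  have hz1 : Complex.exp (2 * Real.pi * Complex.I / F) ≠ 1 := by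
    intro h
    rw [Complex.exp_eq_one_iff] at h
    obtain ⟨n, hn⟩ := h
    have hIpi : (2 : ℂ) * Real.pi * Complex.I ≠ 0 := by
      simp [Complex.I_ne_zero, Real.pi_ne_zero]
    have h2 : (n : ℂ) * F = 1 := by
      refine mul_left_cancel₀ hIpi ?_
      field_simp at hn
      linear_combination (-(2 * (Real.pi : ℂ) * Complex.I)) * hn
    have h3 : (n * F : ℤ) = 1 := by exact_mod_cast h2
    have hF2 : (2 : ℤ) ≤ (F : ℤ) := by exact_mod_cast hF
    rcases lt_trichotomy n 0 with h | h | h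
    · nlinarith
    · simp [h] at h3
    · nlinarith
  have hpow : Complex.exp (2 * Real.pi * Complex.I / F) ^ F = 1 := by
    rw [← Complex.exp_nat_mul]
    rw [mul_div_cancel₀ _ hF0]
    exact Complex.exp_two_pi_mul_I
  rw [geom_sum_eq hz1, hpow]
  simp


/-- Theorem 2 (2D interference nulling): if L ≤ Ω(N) (the number of prime factors of N
with multiplicity), then for any wavelength λ > 0, minimum spacing D_min > 0, and
direction pairs (a_l, b_l) with a_l ≠ 0, there exist N points in ℝ² pairwise at least
D_min apart whose array factor vanishes in every direction l. -/
theorem exists_2D_nulling_positions (N : ℕ) (hN : 2 ≤ N) (L : ℕ) (hL : 0 < L)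
    (hLI : L ≤ N.primeFactorsList.length)
    (lam Dmin : ℝ) (hlam : 0 < lam) (hD : 0 < Dmin)
    (a b : Fin L → ℝ) (ha : ∀ l, a l ≠ 0) :
    ∃ t : Fin N → EuclideanSpace ℝ (Fin 2),
      (∀ n m : Fin N, n ≠ m → Dmin ≤ ‖t n - t m‖) ∧
      ∀ l : Fin L, ∑ n : Fin N,
        Complex.exp (Complex.I * ((2 * Real.pi / lam) * (a l * t n 0 + b l * t n 1))) = 0 := by
  classical
  set lst := N.primeFactorsList with hlst
  set K := lst.length with hKdef
  have hgetD : ∀ i, 2 ≤ lst.getD i 2 := by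
    intro i
    by_cases h : i < K
    · rw [List.getD_eq_getElem lst 2 h]
      exact (Nat.prime_of_mem_primeFactorsList (lst.getElem_mem h)).two_le
    · rw [List.getD_eq_default lst 2 (by omega)]
  set c : ℕ → ℝ := fun i => if h : i < L then lam / a ⟨i, h⟩ else 1 with hcdef
  have hc : ∀ i, c i ≠ 0 := by
    intro i
    rw [hcdef]
    by_cases h : i < L
    · simp only [dif_pos h]
      exact div_ne_zero hlam.ne' (ha _)
    · simp only [dif_neg h]
      exact one_ne_zero
  set q : ℕ → ℝ := fun i => 1 / (lst.getD i 2) with hqdef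
  set g : ℕ → ℝ := fun i => (lst.getD i 2 : ℝ) - 1 with hgdef
  set d : ℕ → ℝ := dseq c q g hc Dmin with hddef
  have hg : ∀ j, 0 ≤ g j := by
    intro j
    rw [hgdef]
    have := hgetD j
    have : (2 : ℝ) ≤ (lst.getD j 2 : ℝ) := by exact_mod_cast this
    dsimp only
    linarith
  have hd : ∀ i, Dmin + ∑ j ∈ range i, g j * d j ≤ d i := dseq_ge c q g hc Dmin
  set F : Fin K → ℕ := fun i => lst.get i with hFdef
  have hF2 : ∀ i, 2 ≤ F i := by
    intro i
    exact (Nat.prime_of_mem_primeFactorsList (lst.get_mem i)).two_le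
  have hFgetD : ∀ i : Fin K, (F i : ℕ) = lst.getD i.val 2 := by
    intro i
    rw [List.getD_eq_getElem lst 2 i.isLt]
    rfl
  have hNF : N = ∏ i : Fin K, F i := by
    conv_lhs => rw [← Nat.prod_primeFactorsList (by omega : N ≠ 0), ← hlst,
      ← List.ofFn_get lst, List.prod_ofFn]
  set e : Fin N ≃ (∀ i : Fin K, Fin (F i)) := (finCongr hNF).trans finPiFinEquiv.symm with hedef
  set X : Fin N → ℝ := fun n => ∑ i : Fin K, ((e n i : ℕ) : ℝ) * d i.val with hXdef
  set t : Fin N → EuclideanSpace ℝ (Fin 2) :=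
    fun n => (WithLp.equiv 2 (Fin 2 → ℝ)).symm ![X n, 0] with htdef
  have ht0 : ∀ n, t n 0 = X n := fun n => rfl
  have ht1 : ∀ n, t n 1 = 0 := fun n => rfl
  refine ⟨t, ?_, ?_⟩
  · intro n m hnm
    have hkk : e n ≠ e m := fun h => hnm (e.injective h)
    set k := e n with hk
    set k' := e m with hk'
    set ediff : ℕ → ℤ :=
      fun j => if h : j < K then ((k ⟨j, h⟩ : ℕ) : ℤ) - ((k' ⟨j, h⟩ : ℕ) : ℤ) else 0 with hedf
    have hs : (Finset.univ.filter (fun i : Fin K => k i ≠ k' i)).Nonempty := by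
      by_contra h
      rw [Finset.not_nonempty_iff_eq_empty, Finset.filter_eq_empty_iff] at h
      exact hkk (funext fun i => not_ne_iff.mp (h (mem_univ i)))
    set i0 := (Finset.univ.filter (fun i : Fin K => k i ≠ k' i)).max' hs with hi0def
    have hi0mem := (Finset.univ.filter (fun i : Fin K => k i ≠ k' i)).max'_mem hs
    rw [mem_filter] at hi0mem
    rw [← hi0def] at hi0mem
    have hne0 : ediff i0.val ≠ 0 := by
      have hval : (k i0 : ℕ) ≠ (k' i0 : ℕ) := fun hcon => hi0mem.2 (Fin.val_injective hcon)
      rw [hedf]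
      simp only [dif_pos i0.isLt, Fin.eta]
      omega
    have hmax : ∀ j, i0.val < j → ediff j = 0 := by
      intro j hj
      rw [hedf]
      by_cases h : j < K
      · simp only [dif_pos h]
        have hnotmem : (⟨j, h⟩ : Fin K) ∉ Finset.univ.filter (fun i : Fin K => k i ≠ k' i) := by
          intro hmem
          have := Finset.le_max' _ _ hmem
          rw [← hi0def, Fin.le_def] at this
          simp only at this
          omega
        rw [mem_filter, not_and, not_ne_iff] at hnotmem
        rw [hnotmem (mem_univ _)]
        ring
      · simp only [dif_neg h]
    have he : ∀ j, |((ediff j : ℤ) : ℝ)| ≤ g j := by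
      intro j
      rw [hedf, hgdef]
      by_cases h : j < K
      · simp only [dif_pos h]
        have h1 : (k ⟨j, h⟩ : ℕ) < F ⟨j, h⟩ := (k ⟨j, h⟩).isLt
        have h2 : (k' ⟨j, h⟩ : ℕ) < F ⟨j, h⟩ := (k' ⟨j, h⟩).isLt
        have habs : |((k ⟨j, h⟩ : ℕ) : ℤ) - ((k' ⟨j, h⟩ : ℕ) : ℤ)| ≤ (F ⟨j, h⟩ : ℤ) - 1 := by
          rw [abs_le]
          omega
        rw [← Int.cast_abs, ← hFgetD ⟨j, h⟩]
        exact_mod_cast habs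
      · simp only [dif_neg h, Int.cast_zero, abs_zero]
        have := hgetD j
        have : (2 : ℝ) ≤ (lst.getD j 2 : ℝ) := by exact_mod_cast this
        linarith
    have hXdiff : X n - X m = ∑ j ∈ range K, (ediff j : ℝ) * d j := by
      rw [hXdef]
      dsimp only
      rw [← hk, ← hk', ← Finset.sum_sub_distrib]
      rw [← Fin.sum_univ_eq_sum_range (fun j => (ediff j : ℝ) * d j) K]
      refine Finset.sum_congr rfl fun i _ => ?_
      rw [hedf]
      simp only [dif_pos i.isLt, Fin.eta]
      push_cast
      ring
    have hsep := sep_lemma d g hg Dmin hD hd ediff he K i0.val i0.isLt hne0 hmax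
    rw [← hXdiff] at hsep
    have hnorm : |X n - X m| ≤ ‖t n - t m‖ := by
      rw [EuclideanSpace.norm_eq]
      rw [Fin.sum_univ_two]
      have e0 : (t n - t m) 0 = X n - X m := by
        rw [PiLp.sub_apply, ht0, ht0]
      have e1 : (t n - t m) 1 = 0 := by
        rw [PiLp.sub_apply, ht1, ht1, sub_zero]
      rw [e0, e1]
      simp only [norm_zero, Real.norm_eq_abs]
      rw [zero_pow (by norm_num : (2:ℕ) ≠ 0), add_zero, sq_abs, Real.sqrt_sq_eq_abs]
    linarith
  · intro l
    have hlK : (l : ℕ) < K := lt_of_lt_of_le l.isLt hLI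
    set i0 : Fin K := ⟨l.val, hlK⟩ with hi0
    simp only [ht0, ht1, Complex.ofReal_zero, mul_zero, add_zero]
    rw [← Equiv.sum_comp e.symm]
    have hXk : ∀ kk : ∀ i : Fin K, Fin (F i),
        X (e.symm kk) = ∑ i : Fin K, ((kk i : ℕ) : ℝ) * d i.val := by
      intro kk
      rw [hXdef]
      dsimp only
      rw [Equiv.apply_symm_apply]
    have step1 : ∀ kk : ∀ i : Fin K, Fin (F i),
        Complex.exp (Complex.I * (2 * (Real.pi : ℂ) / (lam : ℂ) * ((a l : ℂ) * (X (e.symm kk) : ℂ))))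
          = ∏ i : Fin K, Complex.exp
              (Complex.I * (2 * (Real.pi : ℂ) / (lam : ℂ) * ((a l : ℂ) * (((kk i : ℕ) : ℂ) * ((d i.val : ℝ) : ℂ))))) := by
      intro kk
      rw [← Complex.exp_sum]
      congr 1
      rw [hXk]
      push_cast
      simp only [Finset.mul_sum]
    calc ∑ kk : ∀ i : Fin K, Fin (F i),
          Complex.exp (Complex.I * (2 * (Real.pi : ℂ) / (lam : ℂ) * ((a l : ℂ) * (X (e.symm kk) : ℂ))))
        = ∑ kk : ∀ i : Fin K, Fin (F i), ∏ i : Fin K, Complex.exp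
            (Complex.I * (2 * (Real.pi : ℂ) / (lam : ℂ) * ((a l : ℂ) * (((kk i : ℕ) : ℂ) * ((d i.val : ℝ) : ℂ))))) :=
          Finset.sum_congr rfl fun kk _ => step1 kk
      _ = ∏ i : Fin K, ∑ j : Fin (F i), Complex.exp
            (Complex.I * (2 * (Real.pi : ℂ) / (lam : ℂ) * ((a l : ℂ) * (((j : ℕ) : ℂ) * ((d i.val : ℝ) : ℂ))))) := by
          rw [Finset.prod_univ_sum (fun _ => univ), Fintype.piFinset_univ]
      _ = 0 := by
          apply Finset.prod_eq_zero (Finset.mem_univ i0)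
          obtain ⟨m, hm⟩ := dseq_form c q g hc Dmin l.val
          have hcl : c l.val = lam / a l := by
            rw [hcdef]
            simp only [dif_pos l.isLt, Fin.eta]
          have hql : q l.val = 1 / (F i0 : ℝ) := by
            rw [hqdef]
            have hq : (lst.getD l.val 2 : ℝ) = (F i0 : ℝ) := by exact_mod_cast (hFgetD i0).symm
            simp only
            rw [hq]
          have hm' : d l.val = lam / a l * ((m : ℝ) + 1 / (F i0 : ℝ)) := by
            rw [hddef, hm, hcl, hql]
          have hFC : ((F i0 : ℕ) : ℂ) ≠ 0 := by
            have := hF2 i0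
            exact_mod_cast (by omega : (F i0 : ℕ) ≠ 0)
          have hlamC : (lam : ℂ) ≠ 0 := Complex.ofReal_ne_zero.mpr hlam.ne'
          have haC : ((a l : ℝ) : ℂ) ≠ 0 := Complex.ofReal_ne_zero.mpr (ha l)
          have key : ∀ j : Fin (F i0),
              Complex.exp (Complex.I * (2 * (Real.pi : ℂ) / (lam : ℂ)
                  * ((a l : ℂ) * (((j : ℕ) : ℂ) * ((d i0.val : ℝ) : ℂ)))))
                = Complex.exp (2 * (Real.pi : ℂ) * Complex.I / (F i0 : ℂ)) ^ (j : ℕ) := by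
            intro j
            have hstep : Complex.I * (2 * (Real.pi : ℂ) / (lam : ℂ)
                  * ((a l : ℂ) * (((j : ℕ) : ℂ) * ((d i0.val : ℝ) : ℂ))))
                = (((j : ℕ) * m : ℤ) : ℂ) * (2 * (Real.pi : ℂ) * Complex.I)
                  + ((j : ℕ) : ℂ) * (2 * (Real.pi : ℂ) * Complex.I / (F i0 : ℂ)) := by
              rw [show d i0.val = d l.val from rfl, hm']
              push_cast
              field_simp
            rw [hstep, Complex.exp_add, Complex.exp_int_mul_two_pi_mul_I, one_mul,
              Complex.exp_nat_mul]
          calc ∑ j : Fin (F i0), Complex.exp (Complex.I * (2 * (Real.pi : ℂ) / (lam : ℂ)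
                  * ((a l : ℂ) * (((j : ℕ) : ℂ) * ((d i0.val : ℝ) : ℂ)))))
              = ∑ j : Fin (F i0), Complex.exp (2 * (Real.pi : ℂ) * Complex.I / (F i0 : ℂ)) ^ (j : ℕ) :=
                Finset.sum_congr rfl fun j _ => key j
            _ = ∑ j ∈ range (F i0), Complex.exp (2 * (Real.pi : ℂ) * Complex.I / (F i0 : ℂ)) ^ j :=
                Fin.sum_univ_eq_sum_range _ _
            _ = 0 := roots_sum_zero (F i0) (hF2 i0)
end

section
/- Let N ≥ 2 be an integer and let I_N denote the number of prime factors of N counted with multiplicity. Let L be a positive integer with L ≤ I_N, let λ > 0 and D > 0, and let a_1, …, a_L be nonzero real numbers. Then there exist real numbers x_1 < x_2 < ⋯ < x_N with x_{n+1} − x_n ≥ D for every n, such that Σ_{n=1}^{N} exp(i·(2π/λ)·a_l·x_n) = 0 for every l ∈ {1, …, L}. -/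
open Complex Finset

private lemma spacing_strictMono {n : ℕ} {f : Fin n → ℝ} {D : ℝ} (hD : 0 < D)
    (h : ∀ i : Fin n, ∀ hh : (i : ℕ) + 1 < n, f i + D ≤ f ⟨(i : ℕ) + 1, hh⟩) :
    StrictMono f := by
  have key : ∀ k : ℕ, ∀ hk : k < n, ∀ j : ℕ, ∀ hj : j < k, f ⟨j, hj.trans hk⟩ < f ⟨k, hk⟩ := by
    intro k
    induction k with
    | zero => intro hk j hj; omega
    | succ k ih =>
      intro hk j hj
      have hk' : k < n := by omega
      have h1 : f ⟨k, hk'⟩ + D ≤ f ⟨k + 1, hk⟩ := h ⟨k, hk'⟩ hk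
      have h2 : f ⟨k, hk'⟩ < f ⟨k + 1, hk⟩ := by linarith
      rcases Nat.lt_or_ge j k with hjk | hjk
      · exact (ih hk' j hjk).trans h2
      · have : j = k := by omega
        subst this; exact h2
  intro i j hij
  have := key (j : ℕ) j.isLt (i : ℕ) hij
  simpa using this

private lemma sum_exp_zero (p : ℕ) (hp : 2 ≤ p) (m : ℤ) :
    ∑ i : Fin p, Complex.exp (Complex.I *
      (((i : ℕ) : ℝ) * (2 * Real.pi * (1 + (p : ℝ) * (m : ℝ)) / (p : ℝ)))) = 0 := by
  have hp0 : (p : ℕ) ≠ 0 := by omega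
  have hprim : IsPrimitiveRoot (Complex.exp (2 * ↑Real.pi * Complex.I / (p : ℂ))) p :=
    Complex.isPrimitiveRoot_exp p hp0
  have hzero : ∑ i ∈ Finset.range p,
      (Complex.exp (2 * ↑Real.pi * Complex.I / (p : ℂ))) ^ i = 0 :=
    hprim.geom_sum_eq_zero (by omega)
  rw [← Fin.sum_univ_eq_sum_range (fun i =>
    (Complex.exp (2 * ↑Real.pi * Complex.I / (p : ℂ))) ^ i) p] at hzero
  rw [← hzero]
  refine Finset.sum_congr rfl fun i _ => ?_
  have hpC : (p : ℂ) ≠ 0 := by exact_mod_cast (Nat.cast_ne_zero (R := ℂ)).2 hp0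
  rw [← Complex.exp_nat_mul, Complex.exp_eq_exp_iff_exists_int]
  refine ⟨(i : ℤ) * m, ?_⟩
  push_cast
  field_simp

private lemma key_lemma (lam D : ℝ) (hlam : 0 < lam) (hD : 0 < D) :
    ∀ (as : List ℝ), (∀ b ∈ as, b ≠ 0) →
    ∀ N : ℕ, 0 < N → as.length ≤ N.primeFactorsList.length →
    ∃ x : Fin N → ℝ, StrictMono x ∧
      (∀ i : Fin N, ∀ h : (i : ℕ) + 1 < N, x i + D ≤ x ⟨(i : ℕ) + 1, h⟩) ∧
      ∀ b ∈ as, ∑ n : Fin N,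
        Complex.exp (Complex.I * ((2 * Real.pi / lam) * (b * x n))) = 0 := by
  intro as
  induction as with
  | nil =>
    intro _ N hN _
    refine ⟨fun n => (n : ℕ) * D, ?_, ?_, by simp⟩
    · intro i j hij
      have h1 : (i : ℕ) < (j : ℕ) := hij
      have h2 : ((i : ℕ) : ℝ) < ((j : ℕ) : ℝ) := by exact_mod_cast h1
      exact mul_lt_mul_of_pos_right h2 hD
    · intro i h
      simp only
      push_cast
      linarith
  | cons b t ih =>
    intro hne N hN hlen
    have hb : b ≠ 0 := hne b List.mem_cons_self
    have ht : ∀ c ∈ t, c ≠ 0 := fun c hc => hne c (List.mem_cons_of_mem _ hc)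
    have hN1 : N ≠ 1 := by
      rintro rfl
      simp [Nat.primeFactorsList_one] at hlen
    set p := N.minFac with hpdef
    have hp : p.Prime := Nat.minFac_prime hN1
    have hp2 : 2 ≤ p := hp.two_le
    set M := N / p with hMdef
    have hpdvd : p ∣ N := Nat.minFac_dvd N
    have hNM : p * M = N := Nat.mul_div_cancel' hpdvd
    have hM : 0 < M := by
      rcases Nat.eq_zero_or_pos M with h | h
      · rw [h, Nat.mul_zero] at hNM; omega
      · exact h
    -- length condition for M
    have hlenM : t.length ≤ M.primeFactorsList.length := by
      have hperm : List.Perm ((p * M).primeFactorsList) (p.primeFactorsList ++ M.primeFactorsList) :=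
        Nat.perm_primeFactorsList_mul (by omega) (by omega)
      have hlen2 : N.primeFactorsList.length =
          1 + M.primeFactorsList.length := by
        rw [← hNM, hperm.length_eq, List.length_append, Nat.primeFactorsList_prime hp,
          List.length_singleton]
      have hlen3 : t.length + 1 ≤ N.primeFactorsList.length := by
        simpa using hlen
      omega
    obtain ⟨x, hmono, hspace, hsum⟩ := ih ht M hM hlenM
    -- choose the block shift c
    have hMlt : M - 1 < M := by omega
    set B : ℝ := x ⟨M - 1, hMlt⟩ - x ⟨0, hM⟩ + D with hBdef
    have hB : 0 < B := by
      have : x ⟨0, hM⟩ ≤ x ⟨M - 1, hMlt⟩ := hmono.monotone (by simp)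
      simp only [hBdef]; linarith
    set s : ℝ := lam / (p * b) with hsdef
    have hpR : (0 : ℝ) < (p : ℝ) := by exact_mod_cast hp.pos
    have hpne : (p : ℝ) ≠ 0 := ne_of_gt hpR
    have hlamne : lam ≠ 0 := ne_of_gt hlam
    have hs : s ≠ 0 := by
      apply div_ne_zero (by linarith)
      exact mul_ne_zero (by positivity) hb
    set m : ℤ := if 0 < s then ⌈(B / s - 1) / p⌉ else ⌊(B / s - 1) / p⌋ with hmdef
    set c : ℝ := s * (1 + (p : ℝ) * (m : ℝ)) with hcdef
    have hcB : B ≤ c := by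
      rcases lt_or_gt_of_ne hs with hneg | hpos
      · -- s < 0
        have hm : m = ⌊(B / s - 1) / p⌋ := by rw [hmdef, if_neg (by linarith)]
        have h1 : (m : ℝ) ≤ (B / s - 1) / p := hm ▸ Int.floor_le _
        have h2 : (p : ℝ) * (m : ℝ) ≤ B / s - 1 := by
          have := mul_le_mul_of_nonneg_left h1 (le_of_lt hpR)
          calc (p : ℝ) * m ≤ (p : ℝ) * ((B / s - 1) / p) := this
            _ = B / s - 1 := by field_simp
        have h3 : 1 + (p : ℝ) * m ≤ B / s := by linarith
        have h4 : s * (B / s) ≤ s * (1 + (p : ℝ) * m) :=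
          mul_le_mul_of_nonpos_left h3 (le_of_lt hneg)
        rw [mul_div_cancel₀ B hs] at h4
        exact h4
      · -- 0 < s
        have hm : m = ⌈(B / s - 1) / p⌉ := by rw [hmdef, if_pos hpos]
        have h1 : (B / s - 1) / p ≤ (m : ℝ) := hm ▸ Int.le_ceil _
        have h2 : B / s - 1 ≤ (p : ℝ) * (m : ℝ) := by
          have := mul_le_mul_of_nonneg_left h1 (le_of_lt hpR)
          calc B / s - 1 = (p : ℝ) * ((B / s - 1) / p) := by field_simp
            _ ≤ (p : ℝ) * m := this
        have h3 : B / s ≤ 1 + (p : ℝ) * m := by linarith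
        have h4 : s * (B / s) ≤ s * (1 + (p : ℝ) * m) :=
          mul_le_mul_of_nonneg_left h3 (le_of_lt hpos)
        rw [mul_div_cancel₀ B hs] at h4
        exact h4
    have hc : 0 < c := lt_of_lt_of_le hB hcB
    -- key phase identity
    have hKbc : (2 * Real.pi / lam) * (b * c) =
        2 * Real.pi * (1 + (p : ℝ) * (m : ℝ)) / (p : ℝ) := by
      rw [hcdef, hsdef]
      field_simp
    -- define the positions
    refine ⟨fun n => x ⟨(n : ℕ) % M, Nat.mod_lt _ hM⟩ + ((n : ℕ) / M : ℕ) * c, ?_, ?_, ?_⟩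
    -- spacing (proved first, then strict mono from it)
    case refine_2 =>
      intro i h
      simp only
      have hdecomp : (i : ℕ) % M + M * ((i : ℕ) / M) = (i : ℕ) := Nat.mod_add_div _ _
      set j := (i : ℕ) % M with hj
      set q := (i : ℕ) / M with hq
      have hjM : j < M := Nat.mod_lt _ hM
      rcases Nat.lt_or_ge (j + 1) M with hlt | hge
      · -- within a block
        have e1 : ((i : ℕ) + 1) % M = j + 1 := by
          rw [← hdecomp]
          rw [show j + M * q + 1 = (j + 1) + M * q by ring]
          rw [Nat.add_mul_mod_self_left, Nat.mod_eq_of_lt hlt]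
        have e2 : ((i : ℕ) + 1) / M = q := by
          rw [← hdecomp]
          rw [show j + M * q + 1 = (j + 1) + M * q by ring]
          rw [Nat.add_mul_div_left _ _ hM, Nat.div_eq_of_lt hlt, Nat.zero_add]
        have hsp := hspace ⟨j, hjM⟩ hlt
        simp only at hsp
        rw [show (⟨((i : ℕ) + 1) % M, Nat.mod_lt _ hM⟩ : Fin M) = ⟨j + 1, hlt⟩ from
          Fin.ext e1, e2]
        linarith
      · -- boundary between blocks
        have hjeq : j = M - 1 := by omega
        have e0 : (i : ℕ) + 1 = M * (q + 1) := by rw [Nat.mul_succ]; omega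
        have e1 : ((i : ℕ) + 1) % M = 0 := by rw [e0, Nat.mul_mod_right]
        have e2 : ((i : ℕ) + 1) / M = q + 1 := by
          rw [e0, Nat.mul_div_cancel_left _ hM]
        rw [show (⟨((i : ℕ) + 1) % M, Nat.mod_lt _ hM⟩ : Fin M) = ⟨0, hM⟩ from
          Fin.ext e1, e2]
        have hx1 : x ⟨j, hjM⟩ = x ⟨M - 1, hMlt⟩ := congrArg x (Fin.ext hjeq)
        have : x ⟨M - 1, hMlt⟩ - x ⟨0, hM⟩ + D ≤ c := hcB
        rw [hx1]
        push_cast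
        nlinarith [this]
    case refine_1 =>
      apply spacing_strictMono hD
      -- reuse the spacing result we just proved? We must re-derive; use the same tactic block:
      intro i h
      simp only
      have hdecomp : (i : ℕ) % M + M * ((i : ℕ) / M) = (i : ℕ) := Nat.mod_add_div _ _
      set j := (i : ℕ) % M with hj
      set q := (i : ℕ) / M with hq
      have hjM : j < M := Nat.mod_lt _ hM
      rcases Nat.lt_or_ge (j + 1) M with hlt | hge
      · have e1 : ((i : ℕ) + 1) % M = j + 1 := by
          rw [← hdecomp]
          rw [show j + M * q + 1 = (j + 1) + M * q by ring]
          rw [Nat.add_mul_mod_self_left, Nat.mod_eq_of_lt hlt]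
        have e2 : ((i : ℕ) + 1) / M = q := by
          rw [← hdecomp]
          rw [show j + M * q + 1 = (j + 1) + M * q by ring]
          rw [Nat.add_mul_div_left _ _ hM, Nat.div_eq_of_lt hlt, Nat.zero_add]
        have hsp := hspace ⟨j, hjM⟩ hlt
        simp only at hsp
        rw [show (⟨((i : ℕ) + 1) % M, Nat.mod_lt _ hM⟩ : Fin M) = ⟨j + 1, hlt⟩ from
          Fin.ext e1, e2]
        linarith
      · have hjeq : j = M - 1 := by omega
        have e0 : (i : ℕ) + 1 = M * (q + 1) := by rw [Nat.mul_succ]; omega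
        have e1 : ((i : ℕ) + 1) % M = 0 := by rw [e0, Nat.mul_mod_right]
        have e2 : ((i : ℕ) + 1) / M = q + 1 := by
          rw [e0, Nat.mul_div_cancel_left _ hM]
        rw [show (⟨((i : ℕ) + 1) % M, Nat.mod_lt _ hM⟩ : Fin M) = ⟨0, hM⟩ from
          Fin.ext e1, e2]
        have hx1 : x ⟨j, hjM⟩ = x ⟨M - 1, hMlt⟩ := congrArg x (Fin.ext hjeq)
        have hcb : x ⟨M - 1, hMlt⟩ - x ⟨0, hM⟩ + D ≤ c := hcB
        rw [hx1]
        push_cast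
        nlinarith [hcb]
    case refine_3 =>
      intro b' hb'
      -- reindex the sum over Fin N = Fin (p * M)
      set y : Fin N → ℝ :=
        fun n => x ⟨(n : ℕ) % M, Nat.mod_lt _ hM⟩ + ((n : ℕ) / M : ℕ) * c with hydef
      set e : Fin p × Fin M ≃ Fin N :=
        finProdFinEquiv.trans (finCongr hNM) with hedef
      have hre : ∑ n : Fin N, Complex.exp (Complex.I * ((2 * Real.pi / lam) * (b' * y n)))
          = ∑ q : Fin p × Fin M,
            Complex.exp (Complex.I * ((2 * Real.pi / lam) * (b' * y (e q)))) :=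
        (Equiv.sum_comp e _).symm
      have hval : ∀ (i : Fin p) (j : Fin M), y (e (i, j)) = x j + (i : ℕ) * c := by
        intro i j
        have hv : ((e (i, j) : Fin N) : ℕ) = (j : ℕ) + M * (i : ℕ) := by
          simp [hedef, finProdFinEquiv]
        have h1 : ((e (i, j) : Fin N) : ℕ) % M = (j : ℕ) := by
          rw [hv, Nat.add_mul_mod_self_left, Nat.mod_eq_of_lt j.isLt]
        have h2 : ((e (i, j) : Fin N) : ℕ) / M = (i : ℕ) := by
          rw [hv, Nat.add_mul_div_left _ _ hM, Nat.div_eq_of_lt j.isLt, Nat.zero_add]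
        have hx : (⟨((e (i, j) : Fin N) : ℕ) % M, Nat.mod_lt _ hM⟩ : Fin M) = j :=
          Fin.ext h1
        simp only [hydef, hx, h2]
      rw [hre]
      have hterm : ∀ (i : Fin p) (j : Fin M),
          Complex.exp (Complex.I * ((2 * Real.pi / lam) * (b' * y (e (i, j)))))
          = Complex.exp (Complex.I * (((i : ℕ) : ℝ) * ((2 * Real.pi / lam) * (b' * c))))
            * Complex.exp (Complex.I * ((2 * Real.pi / lam) * (b' * x j))) := by
        intro i j
        rw [hval i j, ← Complex.exp_add]
        congr 1
        push_cast
        ring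
      rw [Fintype.sum_prod_type]
      simp only [hterm]
      rw [show (∑ i : Fin p, ∑ j : Fin M,
          Complex.exp (Complex.I * (((i : ℕ) : ℝ) * ((2 * Real.pi / lam) * (b' * c))))
            * Complex.exp (Complex.I * ((2 * Real.pi / lam) * (b' * x j))))
          = (∑ i : Fin p,
              Complex.exp (Complex.I * (((i : ℕ) : ℝ) * ((2 * Real.pi / lam) * (b' * c)))))
            * (∑ j : Fin M,
              Complex.exp (Complex.I * ((2 * Real.pi / lam) * (b' * x j)))) by
        rw [Finset.sum_mul]
        exact Finset.sum_congr rfl fun i _ => by rw [Finset.mul_sum]]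
      rcases List.mem_cons.mp hb' with rfl | hbt
      · -- b' = b : first factor vanishes
        have hC : ((2 * Real.pi / lam * (b' * c) : ℝ) : ℂ)
            = ((2 * Real.pi * (1 + (p : ℝ) * (m : ℝ)) / (p : ℝ) : ℝ) : ℂ) :=
          congrArg Complex.ofReal hKbc
        push_cast at hC
        have hzz : ∑ i : Fin p,
            Complex.exp (Complex.I * (((i : ℕ) : ℝ) * ((2 * Real.pi / lam) * (b' * c)))) = 0 := by
          have hfun : ∀ i : Fin p,
              Complex.exp (Complex.I * (((i : ℕ) : ℝ) * ((2 * Real.pi / lam) * (b' * c))))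
              = Complex.exp (Complex.I *
                (((i : ℕ) : ℝ) * (2 * Real.pi * (1 + (p : ℝ) * (m : ℝ)) / (p : ℝ)))) := by
            intro i
            congr 1
            push_cast
            linear_combination (Complex.I * ((i : ℕ) : ℂ)) * hC
          rw [Finset.sum_congr rfl fun i _ => hfun i]
          exact sum_exp_zero p hp2 m
        rw [hzz, zero_mul]
      · -- b' ∈ t : second factor vanishes by IH
        rw [hsum b' hbt, mul_zero]

/-- 1D null steering: if L ≤ Ω(N) (the number of prime factors of N with multiplicity),
then there exist N antenna coordinates x₁ < x₂ < ⋯ < x_N with consecutive spacing at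
least D such that the array factor vanishes in every undesired direction a_l ≠ 0. -/
theorem exists_1D_nulling_positions (N : ℕ) (hN : 2 ≤ N) (L : ℕ) (hL : 0 < L)
    (hLI : L ≤ N.primeFactorsList.length)
    (lam D : ℝ) (hlam : 0 < lam) (hD : 0 < D)
    (a : Fin L → ℝ) (ha : ∀ l, a l ≠ 0) :
    ∃ x : Fin N → ℝ, StrictMono x ∧
      (∀ i : Fin N, ∀ h : (i : ℕ) + 1 < N, x i + D ≤ x ⟨(i : ℕ) + 1, h⟩) ∧
      ∀ l : Fin L, ∑ n : Fin N,
        Complex.exp (Complex.I * ((2 * Real.pi / lam) * (a l * x n))) = 0 := by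
  obtain ⟨x, h1, h2, h3⟩ := key_lemma lam D hlam hD (List.ofFn a)
    (by
      intro b hb
      rw [List.mem_ofFn] at hb
      obtain ⟨l, rfl⟩ := hb
      exact ha l)
    N (by omega) (by simpa [List.length_ofFn] using hLI)
  exact ⟨x, h1, h2, fun l => h3 (a l) (by rw [List.mem_ofFn]; exact ⟨l, rfl⟩)⟩
end
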